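/- Let X be a countably infinite type and σ a finitary permutation of X (σ moves only finitely many elements). Then there exist functions f₁, f₂ defined on subsets of X ∪ {z} (z a fresh element, using a fixed enumeration of a cofinite part of X) such that f₁ is injective but not surjective onto its codomain ('forgetful'), f₂ is injective and surjective onto the complement appropriately ('retentive'), f₁ and f₂ have different domains, and f₂ ∘ f₁ = σ⁻¹ on X. Concretely: if σ = τ₁⋯τ_m is a disjoint cycle decomposition with τᵢ = (a_{i,1} ⋯ a_{i,kᵢ}) and b₁, b₂, … enumerates the elements of X fixed by σ, then σ⁻¹ equals the composition of the 'backward' infinite cycle (⋯ b₃ b₂ b₁ a_{m,k_m} ⋯ a_{2,k₂} z a_{1,k₁}) after the 'forward' infinite cycle (a_{1,k₁} ⋯ a_{1,1} z a_{2,k₂} ⋯ a_{2,1} a_{3,k₃} ⋯ a_{m,1} b₁ b₂ b₃ ⋯), evaluated at every element of X. -/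

import Mathlib

private lemma stmt19.prodFix {X : Type*} [DecidableEq X] (M : List (List X)) (x : X)
    (h : ∀ l ∈ M, x ∉ l) : (M.map List.formPerm).prod x = x := by
  induction M with
  | nil => simp
  | cons l M ih =>
      simp only [List.map_cons, List.prod_cons, Equiv.Perm.mul_apply]
      rw [ih fun l' hl' => h l' (List.mem_cons_of_mem _ hl'),
        List.formPerm_apply_of_notMem (h l (List.mem_cons_self))]

private lemma stmt19.prodMem {X : Type*} [DecidableEq X] (M : List (List X))
    (hdisj : M.Pairwise fun l l' => ∀ a ∈ l, a ∉ l') (l : List X) (hl : l ∈ M)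
    (x : X) (hx : x ∈ l) : (M.map List.formPerm).prod x = l.formPerm x := by
  induction M with
  | nil => simp at hl
  | cons l' M ih =>
      rw [List.pairwise_cons] at hdisj
      simp only [List.map_cons, List.prod_cons, Equiv.Perm.mul_apply]
      rcases List.mem_cons.mp hl with rfl | hl
      · rw [stmt19.prodFix M x fun l'' hl'' => hdisj.1 l'' hl'' x hx]
      · rw [ih hdisj.2 hl]
        refine List.formPerm_apply_of_notMem fun hmem => ?_
        exact hdisj.1 l hl _ hmem (List.formPerm_apply_mem_of_mem hx)

/-- the flattened reversed-blocks list -/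
private def stmt19.blocks {X : Type*} (T : List (List X)) : List (Option X) :=
  (T.map fun l => l.reverse.map some).flatten

open stmt19 in
private lemma stmt19.entryLem {X : Type*} (b : ℕ → X) (g r : ℕ → Option X)
    (T : List (List X)) (p q : ℕ)
    (hne : ∀ l ∈ T, l ≠ [])
    (Hg : ∀ j, g (p + j) = ((blocks T)[j]?).getD (some (b (j - (blocks T).length))))
    (Hr : ∀ t, r (q + t) = ((T.map List.getLast?)[t]?).getD (some (b (t - T.length)))) :
    g p = r q := by
  have hg := Hg 0
  have hr := Hr 0
  rw [Nat.add_zero] at hg hr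
  rw [hg, hr]
  cases T with
  | nil => simp [blocks]
  | cons l T =>
      have hl : l ≠ [] := hne l (List.mem_cons_self)
      have hlen : 0 < l.length := List.length_pos_iff.mpr hl
      obtain ⟨y, hy⟩ := List.getLast?_isSome.mpr hl |> Option.isSome_iff_exists.mp
      have h0 : (blocks (l :: T))[0]? = some (some y) := by
        show ((l.reverse.map some) ++ blocks T)[0]? = _
        rw [List.getElem?_append_left (by simpa using hlen), ← List.head?_eq_getElem?,
          List.head?_map, List.head?_reverse, hy, Option.map_some]
      rw [h0]
      simp [hy]

open stmt19 in
private lemma stmt19.claimB {X : Type*} (σi : X → X) (b : ℕ → X) (r : ℕ → Option X)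
    (f₂ : Option X → Option X)
    (hf₂ : ∀ j, f₂ (r (j + 1)) = r j)
    (hσb : ∀ n, σi (b n) = b n)
    (g : ℕ → Option X) :
    ∀ T : List (List X),
    (∀ l ∈ T, l ≠ []) →
    (∀ l ∈ T, ∀ j y y', l[j]? = some y → l[j+1]? = some y' → σi y' = y) →
    (∀ l ∈ T, ∀ y y', l.getLast? = some y → l.head? = some y' → σi y' = y) →
    (∀ l ∈ T, ∀ j y, j + 1 < l.length → l[j]? = some y → f₂ (some y) = some y) →
    ∀ p q : ℕ,
    (∀ j, g (p + j) = ((blocks T)[j]?).getD (some (b (j - (blocks T).length)))) →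
    (∀ t, r (q + t) = ((T.map List.getLast?)[t]?).getD (some (b (t - T.length)))) →
    ∀ i, f₂ (g (p + 1 + i)) = Option.map σi (g (p + i)) := by
  intro T
  induction T with
  | nil =>
      intro _ _ _ _ p q Hg Hr i
      have hgv : ∀ j, g (p + j) = some (b j) := by
        intro j; rw [Hg j]; simp [blocks]
      have hrv : ∀ t, r (q + t) = some (b t) := by
        intro t; rw [Hr t]; simp
      have h1 : g (p + 1 + i) = r (q + i + 1) := by
        rw [show p + 1 + i = p + (1 + i) by omega, hgv,
          show q + i + 1 = q + (i + 1) by omega, hrv, Nat.add_comm 1 i]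
      rw [h1, hf₂, hrv i, hgv i]
      simp [hσb]
  | cons l T ih =>
      intro hne hstep hwrap hfix p q Hg Hr i
      have hlmem : l ∈ l :: T := List.mem_cons_self
      have hl : l ≠ [] := hne l hlmem
      have hk : 0 < l.length := List.length_pos_iff.mpr hl
      have hblocks : blocks (l :: T) = (l.reverse.map some) ++ blocks T := rfl
      have hblen : (l.reverse.map some).length = l.length := by simp
      have Hg' : ∀ j, g (p + l.length + j) =
          ((blocks T)[j]?).getD (some (b (j - (blocks T).length))) := by
        intro j
        have h1 := Hg (l.length + j)
        rw [show p + (l.length + j) = p + l.length + j by omega] at h1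
        rw [h1, hblocks, List.getElem?_append_right (by rw [hblen]; omega),
          List.length_append, hblen]
        congr 2
        · omega
        · congr 1; omega
      have Hr' : ∀ t, r (q + 1 + t) =
          ((T.map List.getLast?)[t]?).getD (some (b (t - T.length))) := by
        intro t
        have h1 := Hr (1 + t)
        rw [show q + (1 + t) = q + 1 + t by omega] at h1
        rw [h1, show (1 : ℕ) + t = t + 1 by omega]
        rw [List.map_cons, List.getElem?_cons_succ, List.length_cons]
        congr 2
        congr 1
        omega
      have hgval : ∀ j, (hj : j < l.length) → g (p + j) = some (l[l.length - 1 - j]'(by omega)) := by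
        intro j hj
        rw [Hg j, hblocks, List.getElem?_append_left (by rw [hblen]; omega),
          List.getElem?_map, List.getElem?_reverse (by simpa using hj),
          List.getElem?_eq_getElem (by omega)]
        rfl
      rcases Nat.lt_or_ge i l.length with hik | hik
      · rcases Nat.lt_or_ge (i + 1) l.length with hik1 | hik1
        · -- interior of the block
          have hlt1 : l.length - 1 - (i + 1) < l.length := by omega
          have hlt0 : l.length - 1 - i < l.length := by omega
          rw [show p + 1 + i = p + (i + 1) by omega, hgval (i + 1) hik1, hgval i hik]
          have key := hstep l hlmem (l.length - 1 - (i + 1))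
            (l[l.length - 1 - (i + 1)]'hlt1) (l[l.length - 1 - i]'hlt0)
            (List.getElem?_eq_getElem hlt1)
            (by rw [show l.length - 1 - (i + 1) + 1 = l.length - 1 - i by omega]
                exact List.getElem?_eq_getElem hlt0)
          have hfx := hfix l hlmem (l.length - 1 - (i + 1)) (l[l.length - 1 - (i + 1)]'hlt1)
            (by omega) (List.getElem?_eq_getElem hlt1)
          rw [hfx, Option.map_some, key]
        · -- at the left end of the block: i + 1 = l.length
          have hentry : g (p + l.length) = r (q + 1) :=
            entryLem b g r T (p + l.length) (q + 1)
              (fun l' hl' => hne l' (List.mem_cons_of_mem _ hl')) Hg' Hr'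
          rw [show p + 1 + i = p + l.length + 0 by omega, Nat.add_zero, hentry, hf₂ q]
          have hq0 := Hr 0
          rw [Nat.add_zero] at hq0
          rw [hq0, List.map_cons, List.getElem?_cons_zero, Option.getD_some]
          obtain ⟨y, hy⟩ := List.getLast?_isSome.mpr hl |> Option.isSome_iff_exists.mp
          rw [hgval i hik, hy]
          have hhead : l.head? = some (l[l.length - 1 - i]'(by omega)) := by
            rw [List.head?_eq_getElem?,
              ← List.getElem?_eq_getElem (show l.length - 1 - i < l.length by omega)]
            congr 1
            omega
          rw [Option.map_some, hwrap l hlmem y _ hy hhead]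
      · -- in the remaining blocks
        obtain ⟨i', rfl⟩ : ∃ i', i = l.length + i' := ⟨i - l.length, by omega⟩
        have := ih (fun l' hl' => hne l' (List.mem_cons_of_mem _ hl'))
          (fun l' hl' => hstep l' (List.mem_cons_of_mem _ hl'))
          (fun l' hl' => hwrap l' (List.mem_cons_of_mem _ hl'))
          (fun l' hl' => hfix l' (List.mem_cons_of_mem _ hl'))
          (p + l.length) (q + 1) Hg' Hr' i'
        rw [show p + 1 + (l.length + i') = p + l.length + 1 + i' by omega,
          show p + (l.length + i') = p + l.length + i' by omega]
        exact this

namespace stmt19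
variable {X : Type*}

private def PL (L : List (List X)) : List (Option X) :=
  (L.headI.reverse.map some) ++ [none] ++ (L.tail.map fun l => l.reverse.map some).flatten

private def gL (L : List (List X)) (b : ℕ → X) : ℕ → Option X := fun i =>
  if h : i < (PL L).length then (PL L).get ⟨i, h⟩ else some (b (i - (PL L).length))

private def RL (L : List (List X)) : List (Option X) :=
  L.headI.getLast? :: none :: (L.tail.map List.getLast?)

private def rL (L : List (List X)) (b : ℕ → X) : ℕ → Option X := fun i =>
  if h : i < (RL L).length then (RL L).get ⟨i, h⟩ else some (b (i - (RL L).length))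

private lemma gq (L : List (List X)) (b : ℕ → X) (j : ℕ) :
    gL L b j = ((PL L)[j]?).getD (some (b (j - (PL L).length))) := by
  unfold gL
  by_cases h : j < (PL L).length
  · rw [dif_pos h, List.getElem?_eq_getElem h, Option.getD_some, List.get_eq_getElem]
  · rw [dif_neg h, List.getElem?_eq_none (by omega), Option.getD_none]

private lemma rq (L : List (List X)) (b : ℕ → X) (j : ℕ) :
    rL L b j = ((RL L)[j]?).getD (some (b (j - (RL L).length))) := by
  unfold rL
  by_cases h : j < (RL L).length
  · rw [dif_pos h, List.getElem?_eq_getElem h, Option.getD_some, List.get_eq_getElem]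
  · rw [dif_neg h, List.getElem?_eq_none (by omega), Option.getD_none]

private lemma getLast_mem' (l : List X) (y : X) (hy : l.getLast? = some y) : y ∈ l := by
  rw [List.getLast?_eq_getElem?] at hy
  obtain ⟨h, rfl⟩ := List.getElem?_eq_some_iff.mp hy
  exact List.getElem_mem h

end stmt19

open stmt19 in
private lemma stmt19.main {X : Type*} [DecidableEq X] (σ : Equiv.Perm X)
    (L : List (List X)) (hL : L ≠ [])
    (hnd : ∀ l ∈ L, l.Nodup) (hlen : ∀ l ∈ L, 2 ≤ l.length)
    (hdisj : L.Pairwise fun l l' => ∀ a ∈ l, a ∉ l')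
    (hσ : σ = (L.map List.formPerm).prod)
    (hsupp : ∀ x : X, σ x = x ↔ ∀ l ∈ L, x ∉ l)
    (b : ℕ → X) (hb : Function.Injective b)
    (hbr : Set.range b = {x : X | σ x = x}) :
    ∃ f₁ f₂ : Option X → Option X,
      (∀ i, f₁ (gL L b i) = gL L b (i + 1)) ∧
      Function.Injective f₁ ∧ ¬ Function.Surjective f₁ ∧
      (∀ i, f₂ (rL L b (i + 1)) = rL L b i) ∧
      (∀ t, t ∉ Set.range (rL L b) → f₂ t = t) ∧
      Function.Surjective f₂ ∧
      Set.range (gL L b) ≠ Set.range (rL L b) ∧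
      ∀ x : X, f₂ (f₁ (some x)) = some (σ⁻¹ x) := by
  classical
  obtain ⟨h0, T, rfl⟩ : ∃ h0 T, L = h0 :: T := by
    cases L with
    | nil => exact absurd rfl hL
    | cons a t => exact ⟨a, t, rfl⟩
  have hmem0 : h0 ∈ h0 :: T := List.mem_cons_self
  have hne : ∀ l ∈ h0 :: T, l ≠ [] := by
    intro l hl he
    have := hlen l hl
    rw [he] at this
    simp at this
  have hneT : ∀ l ∈ T, l ≠ [] := fun l hl => hne l (List.mem_cons_of_mem _ hl)
  have hdT : T.Pairwise (fun l l' => ∀ a ∈ l, a ∉ l') := (List.pairwise_cons.mp hdisj).2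
  have hdhT : ∀ l' ∈ T, ∀ a ∈ h0, a ∉ l' := (List.pairwise_cons.mp hdisj).1
  have hsymm : ∀ l ∈ h0 :: T, ∀ l' ∈ h0 :: T, l ≠ l' → ∀ a ∈ l, a ∉ l' := by
    have hs : Symmetric (fun (l l' : List X) => ∀ a ∈ l, a ∉ l') := by
      intro u v h x hxv hxu
      exact h x hxu hxv
    intro l hl l' hl' hne'
    haveI : Std.Symm (fun (l l' : List X) => ∀ a ∈ l, a ∉ l') := ⟨fun _ _ h => hs h⟩
    exact hdisj.forall hl hl' hne'
  -- basic sigma facts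
  have hmoved : ∀ l ∈ h0 :: T, ∀ x ∈ l, σ x ≠ x := by
    intro l hl x hx he
    exact (hsupp x).mp he l hl hx
  have hbfix : ∀ n, σ (b n) = b n := by
    intro n
    have : b n ∈ Set.range b := ⟨n, rfl⟩
    rw [hbr] at this
    exact this
  have hbinv : ∀ n, σ⁻¹ (b n) = b n := by
    intro n
    conv_lhs => rw [← hbfix n]
    exact Equiv.Perm.inv_eq_iff_eq.mpr rfl
  have hstepL : ∀ l ∈ h0 :: T, ∀ j y y', l[j]? = some y → l[j+1]? = some y' →
      σ⁻¹ y' = y := by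
    intro l hl j y y' hy hy'
    obtain ⟨hj, rfl⟩ := List.getElem?_eq_some_iff.mp hy
    obtain ⟨hj1, rfl⟩ := List.getElem?_eq_some_iff.mp hy'
    have h3 := List.formPerm_apply_getElem l (hnd l hl) j hj
    simp only [Nat.mod_eq_of_lt hj1] at h3
    have hs : σ l[j] = l[j+1] := by
      rw [hσ, stmt19.prodMem _ hdisj l hl _ (List.getElem_mem hj), h3]
    rw [← hs, Equiv.Perm.inv_eq_iff_eq]
  have hwrapL : ∀ l ∈ h0 :: T, ∀ y y', l.getLast? = some y → l.head? = some y' →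
      σ⁻¹ y' = y := by
    intro l hl y y' hy hy'
    rw [List.getLast?_eq_getElem?] at hy
    rw [List.head?_eq_getElem?] at hy'
    obtain ⟨hjl, rfl⟩ := List.getElem?_eq_some_iff.mp hy
    obtain ⟨hj0, rfl⟩ := List.getElem?_eq_some_iff.mp hy'
    have h3 := List.formPerm_apply_getElem l (hnd l hl) (l.length - 1) hjl
    have he1 : l.length - 1 + 1 = l.length := by omega
    simp only [he1, Nat.mod_self] at h3
    have hs : σ (l[l.length - 1]'hjl) = l[0] := by
      rw [hσ, stmt19.prodMem _ hdisj l hl _ (List.getElem_mem hjl), h3]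
    rw [← hs, Equiv.Perm.inv_eq_iff_eq]
  -- length facts
  have hA : ((h0.reverse.map some : List (Option X))).length = h0.length := by simp
  have hPeq : PL (h0 :: T) = (h0.reverse.map some ++ [none]) ++ blocks T := rfl
  have gq' : ∀ j, gL (h0 :: T) b j =
      (((h0.reverse.map some ++ [none]) ++ blocks T)[j]?).getD
        (some (b (j - ((h0.reverse.map some ++ [none]) ++ blocks T).length))) :=
    fun j => gq (h0 :: T) b j
  have rq' : ∀ j, rL (h0 :: T) b j =
      ((h0.getLast? :: none :: (T.map List.getLast?))[j]?).getD
        (some (b (j - (h0.getLast? :: none :: (T.map List.getLast?)).length))) :=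
    fun j => rq (h0 :: T) b j
  have hPlen : (PL (h0 :: T)).length = h0.length + 1 + (blocks T).length := by
    rw [hPeq]
    simp [blocks]
    omega
  have hRlen : (RL (h0 :: T)).length = T.length + 2 := by
    show (h0.getLast? :: none :: (T.map List.getLast?)).length = T.length + 2
    simp
  -- g values
  have ghead : ∀ j, (hj : j < h0.length) →
      gL (h0 :: T) b j = some (h0[h0.length - 1 - j]'(by omega)) := by
    intro j hj
    rw [gq', List.getElem?_append_left (by simp; omega),
      List.getElem?_append_left (by rw [hA]; exact hj),
      List.getElem?_map, List.getElem?_reverse (by omega),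
      List.getElem?_eq_getElem (by omega)]
    rfl
  have gmid : gL (h0 :: T) b h0.length = none := by
    rw [gq', List.getElem?_append_left (by simp),
      List.getElem?_append_right (le_of_eq hA), hA, Nat.sub_self]
    rfl
  have Hg0 : ∀ j, gL (h0 :: T) b (h0.length + 1 + j) =
      ((blocks T)[j]?).getD (some (b (j - (blocks T).length))) := by
    intro j
    rw [gq', List.getElem?_append_right (by simp)]
    have he2 : h0.length + 1 + j - (h0.reverse.map some ++ [none]).length = j := by
      simp
    rw [he2]
    have he3 : h0.length + 1 + j - ((h0.reverse.map some ++ [none]) ++ blocks T).length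
        = j - (blocks T).length := by
      simp
      omega
    rw [he3]
  -- r values
  have hr0 : rL (h0 :: T) b 0 = h0.getLast? := by
    rw [rq']
    simp
  have hr1 : rL (h0 :: T) b 1 = none := by
    rw [rq']
    simp
  have Hr0 : ∀ t, rL (h0 :: T) b (2 + t) =
      ((T.map List.getLast?)[t]?).getD (some (b (t - T.length))) := by
    intro t
    rw [rq', show 2 + t = t + 1 + 1 from by omega,
      List.getElem?_cons_succ, List.getElem?_cons_succ]
    have he4 : t + 1 + 1 - (h0.getLast? :: none :: (T.map List.getLast?)).length
        = t - T.length := by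
      simp
    rw [he4]
  -- membership facts
  have blockmem : ∀ v ∈ blocks T, ∃ x, v = some x ∧ ∃ l ∈ T, x ∈ l := by
    intro v hv
    obtain ⟨bl, hbl, hvbl⟩ := List.mem_flatten.mp hv
    obtain ⟨l, hlT, rfl⟩ := List.mem_map.mp hbl
    obtain ⟨x, hx, rfl⟩ := List.mem_map.mp hvbl
    exact ⟨x, rfl, l, hlT, List.mem_reverse.mp hx⟩
  have Pmem : ∀ y : X, some y ∈ PL (h0 :: T) → ∃ l ∈ h0 :: T, y ∈ l := by
    intro y hy
    rw [hPeq] at hy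
    rcases List.mem_append.mp hy with h | h
    · rcases List.mem_append.mp h with h | h
      · obtain ⟨x, hx, he⟩ := List.mem_map.mp h
        injection he with he
        subst he
        exact ⟨h0, hmem0, List.mem_reverse.mp hx⟩
      · simp at h
    · obtain ⟨x, he, l, hlT, hx⟩ := blockmem _ h
      injection he with he
      subst he
      exact ⟨l, List.mem_cons_of_mem _ hlT, hx⟩
  have Rlast : ∀ v ∈ RL (h0 :: T), v = none ∨ ∃ l ∈ h0 :: T, l.getLast? = v := by
    intro v hv
    rcases List.mem_cons.mp hv with rfl | hv
    · exact Or.inr ⟨h0, hmem0, rfl⟩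
    rcases List.mem_cons.mp hv with rfl | hv
    · exact Or.inl rfl
    · obtain ⟨l, hl, rfl⟩ := List.mem_map.mp hv
      exact Or.inr ⟨l, List.mem_cons_of_mem _ hl, rfl⟩
  -- not in range r
  have NotInR : ∀ l ∈ h0 :: T, ∀ j y, j + 1 < l.length → l[j]? = some y →
      (some y : Option X) ∉ Set.range (rL (h0 :: T) b) := by
    rintro l hl j y hj hy ⟨t, ht⟩
    obtain ⟨hjlt, rfl⟩ := List.getElem?_eq_some_iff.mp hy
    have hyl : l[j] ∈ l := List.getElem_mem _
    rw [rq] at ht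
    by_cases hT : t < (RL (h0 :: T)).length
    · rw [List.getElem?_eq_getElem hT, Option.getD_some] at ht
      have hmemR : (RL (h0 :: T))[t] ∈ RL (h0 :: T) := List.getElem_mem _
      rw [ht] at hmemR
      rcases Rlast _ hmemR with he | ⟨l', hl', hlast⟩
      · simp at he
      · rw [List.getLast?_eq_getElem?] at hlast
        obtain ⟨hl'len, he⟩ := List.getElem?_eq_some_iff.mp hlast
        by_cases hll : l = l'
        · subst hll
          have : l.length - 1 = j := ((hnd l hl).getElem_inj_iff).mp he
          omega
        · exact hsymm l hl l' hl' hll _ hyl (he ▸ List.getElem_mem hl'len)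
    · rw [List.getElem?_eq_none (by omega), Option.getD_none] at ht
      have hbe : b (t - (RL (h0 :: T)).length) = l[j] := Option.some.inj ht
      exact hmoved l hl _ hyl (hbe ▸ hbfix _)
  -- nodup facts
  have hPnd : (PL (h0 :: T)).Nodup := by
    rw [hPeq, List.nodup_append]
    refine ⟨List.nodup_append.mpr ⟨?_, ?_, ?_⟩, ?_, ?_⟩
    · exact (List.nodup_reverse.mpr (hnd h0 hmem0)).map (Option.some_injective X)
    · simp
    · intro v hv _ hv' rfl
      obtain ⟨x, hx, rfl⟩ := List.mem_map.mp hv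
      simp at hv'
    · rw [blocks, List.nodup_flatten]
      constructor
      · intro bl hbl
        obtain ⟨l, hlT, rfl⟩ := List.mem_map.mp hbl
        exact (List.nodup_reverse.mpr (hnd l (List.mem_cons_of_mem _ hlT))).map
          (Option.some_injective X)
      · have hdT2 : T.Pairwise (fun l l' =>
            List.Disjoint (l.reverse.map some) (l'.reverse.map some)) := by
          refine hdT.imp_of_mem ?_
          intro a c _ _ hrel v hva hvc
          obtain ⟨x, hx, rfl⟩ := List.mem_map.mp hva
          obtain ⟨x', hx', he⟩ := List.mem_map.mp hvc
          injection he with he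
          subst he
          exact hrel x' (List.mem_reverse.mp hx) (List.mem_reverse.mp hx')
        exact List.Pairwise.map _ (fun a c h => h) hdT2
    · intro v hv _ hv' rfl
      obtain ⟨x, rfl, l, hlT, hx⟩ := blockmem _ hv'
      rcases List.mem_append.mp hv with h | h
      · obtain ⟨x', hx', he⟩ := List.mem_map.mp h
        injection he with he
        subst he
        exact hdhT l hlT x' (List.mem_reverse.mp hx') hx
      · simp at h
  have hRnd : (RL (h0 :: T)).Nodup := by
    show (h0.getLast? :: none :: (T.map List.getLast?)).Nodup
    rw [List.nodup_cons, List.nodup_cons]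
    obtain ⟨y0, hy0⟩ := Option.isSome_iff_exists.mp (List.getLast?_isSome.mpr (hne h0 hmem0))
    refine ⟨?_, ?_, ?_⟩
    · intro hmem
      rcases List.mem_cons.mp hmem with he | hmem
      · rw [hy0] at he
        simp at he
      · obtain ⟨l, hlT, hle⟩ := List.mem_map.mp hmem
        refine hdhT l hlT y0 (getLast_mem' _ _ hy0) (getLast_mem' _ _ ?_)
        rw [hle, hy0]
    · intro hmem
      obtain ⟨l, hlT, hle⟩ := List.mem_map.mp hmem
      have := List.getLast?_isSome.mpr (hneT l hlT)
      rw [hle] at this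
      simp at this
    · refine List.Pairwise.map _ (fun a c h => h) (hdT.imp_of_mem ?_)
      intro a c ha _ hrel he
      obtain ⟨y, hy⟩ := Option.isSome_iff_exists.mp (List.getLast?_isSome.mpr (hneT a ha))
      exact hrel y (getLast_mem' _ _ hy) (getLast_mem' _ _ (by rw [← he, hy]))
  -- injectivity of g and r
  have ginj : Function.Injective (gL (h0 :: T) b) := by
    intro i i' he
    have gl : ∀ {n}, (hn : n < (PL (h0 :: T)).length) → gL (h0 :: T) b n = (PL (h0 :: T))[n] := by
      intro n hn
      rw [gq, List.getElem?_eq_getElem hn, Option.getD_some]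
    have gg : ∀ {n}, ¬(n < (PL (h0 :: T)).length) →
        gL (h0 :: T) b n = some (b (n - (PL (h0 :: T)).length)) := by
      intro n hn
      rw [gq, List.getElem?_eq_none (by omega), Option.getD_none]
    by_cases hi : i < (PL (h0 :: T)).length <;> by_cases hi' : i' < (PL (h0 :: T)).length
    · rw [gl hi, gl hi'] at he
      exact (hPnd.getElem_inj_iff).mp he
    · rw [gl hi, gg hi'] at he
      obtain ⟨l, hl, hyl⟩ := Pmem _ (he ▸ List.getElem_mem hi)
      exact absurd (hbfix _) (hmoved l hl _ hyl)
    · rw [gg hi, gl hi'] at he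
      obtain ⟨l, hl, hyl⟩ := Pmem _ (he ▸ List.getElem_mem hi')
      exact absurd (hbfix _) (hmoved l hl _ hyl)
    · rw [gg hi, gg hi'] at he
      have := hb (Option.some.inj he)
      omega
  have rinj : Function.Injective (rL (h0 :: T) b) := by
    intro i i' he
    have rl : ∀ {n}, (hn : n < (RL (h0 :: T)).length) → rL (h0 :: T) b n = (RL (h0 :: T))[n] := by
      intro n hn
      rw [rq, List.getElem?_eq_getElem hn, Option.getD_some]
    have rg : ∀ {n}, ¬(n < (RL (h0 :: T)).length) →
        rL (h0 :: T) b n = some (b (n - (RL (h0 :: T)).length)) := by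
      intro n hn
      rw [rq, List.getElem?_eq_none (by omega), Option.getD_none]
    have Rfix : ∀ {n} (hn : n < (RL (h0 :: T)).length) (m : ℕ),
        (RL (h0 :: T))[n] = some (b m) → False := by
      intro n hn m he'
      rcases Rlast _ (he' ▸ List.getElem_mem hn) with h | ⟨l, hl, hlast⟩
      · simp at h
      · exact absurd (hbfix m) (hmoved l hl _ (getLast_mem' _ _ hlast))
    by_cases hi : i < (RL (h0 :: T)).length <;> by_cases hi' : i' < (RL (h0 :: T)).length
    · rw [rl hi, rl hi'] at he
      exact (hRnd.getElem_inj_iff).mp he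
    · rw [rl hi, rg hi'] at he
      exact absurd he (by intro h; exact Rfix hi _ h)
    · rw [rg hi, rl hi'] at he
      exact absurd he.symm (by intro h; exact Rfix hi' _ h)
    · rw [rg hi, rg hi'] at he
      have := hb (Option.some.inj he)
      omega
  -- surjectivity of g
  have gsurj : Function.Surjective (gL (h0 :: T) b) := by
    intro t
    cases t with
    | none => exact ⟨h0.length, gmid⟩
    | some x =>
        by_cases hx : σ x = x
        · have : x ∈ Set.range b := by
            rw [hbr]
            exact hx
          obtain ⟨n, rfl⟩ := this
          refine ⟨(PL (h0 :: T)).length + n, ?_⟩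
          rw [gq, List.getElem?_eq_none (by omega), Option.getD_none]
          congr 2
          omega
        · have hex : ∃ l ∈ h0 :: T, x ∈ l := by
            by_contra hc
            push_neg at hc
            exact hx ((hsupp x).mpr hc)
          obtain ⟨l, hl, hxl⟩ := hex
          have hmemP : some x ∈ PL (h0 :: T) := by
            rw [hPeq]
            rcases List.mem_cons.mp hl with rfl | hlT
            · exact List.mem_append_left _ (List.mem_append_left _
                (List.mem_map.mpr ⟨x, List.mem_reverse.mpr hxl, rfl⟩))
            · exact List.mem_append_right _ (List.mem_flatten.mpr
                ⟨l.reverse.map some, List.mem_map.mpr ⟨l, hlT, rfl⟩,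
                  List.mem_map.mpr ⟨x, List.mem_reverse.mpr hxl, rfl⟩⟩)
          obtain ⟨j, hj, hje⟩ := List.mem_iff_getElem.mp hmemP
          exact ⟨j, by rw [gq, List.getElem?_eq_getElem hj, Option.getD_some, hje]⟩
  -- construct f₁ and f₂
  have hgbij : Function.Bijective (gL (h0 :: T) b) := ⟨ginj, gsurj⟩
  set e := Equiv.ofBijective _ hgbij with hedef
  have hesymm : ∀ i, e.symm (gL (h0 :: T) b i) = i := fun i => e.symm_apply_apply i
  have hgesymm : ∀ t, gL (h0 :: T) b (e.symm t) = t := fun t => e.apply_symm_apply t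
  set f₁ : Option X → Option X := fun t => gL (h0 :: T) b (e.symm t + 1) with hf₁def
  set f₂ : Option X → Option X := fun t =>
    if h : ∃ j, rL (h0 :: T) b j = t then rL (h0 :: T) b (Classical.choose h - 1) else t
    with hf₂def
  have hf₂r : ∀ i, f₂ (rL (h0 :: T) b (i + 1)) = rL (h0 :: T) b i := by
    intro i
    have hex : ∃ j, rL (h0 :: T) b j = rL (h0 :: T) b (i + 1) := ⟨i + 1, rfl⟩
    rw [hf₂def]
    simp only
    rw [dif_pos hex]
    have : Classical.choose hex = i + 1 := rinj (Classical.choose_spec hex)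
    rw [this]
    simp
  have hf₂fix : ∀ t, t ∉ Set.range (rL (h0 :: T) b) → f₂ t = t := by
    intro t ht
    rw [hf₂def]
    exact dif_neg ht
  have hf₂surj : Function.Surjective f₂ := by
    intro t
    by_cases ht : t ∈ Set.range (rL (h0 :: T) b)
    · obtain ⟨j, hj⟩ := ht
      exact ⟨rL (h0 :: T) b (j + 1), by rw [hf₂r j, hj]⟩
    · exact ⟨t, hf₂fix t ht⟩
  have hfixf₂ : ∀ l ∈ h0 :: T, ∀ j y, j + 1 < l.length → l[j]? = some y →
      f₂ (some y) = some y :=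
    fun l hl j y hj hy => hf₂fix _ (NotInR l hl j y hj hy)
  -- the main computation
  have MAIN : ∀ i, f₂ (gL (h0 :: T) b (i + 1)) =
      Option.map (⇑σ⁻¹) (gL (h0 :: T) b i) := by
    intro i
    rcases Nat.lt_or_ge (i + 1) h0.length with c1 | c1
    · have hlt1 : h0.length - 1 - (i + 1) < h0.length := by omega
      have hlt0 : h0.length - 1 - i < h0.length := by omega
      rw [ghead (i + 1) c1, ghead i (by omega)]
      have key := hstepL h0 hmem0 (h0.length - 1 - (i + 1)) _ _
        (List.getElem?_eq_getElem hlt1)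
        (by rw [show h0.length - 1 - (i + 1) + 1 = h0.length - 1 - i from by omega]
            exact List.getElem?_eq_getElem hlt0)
      rw [hfixf₂ h0 hmem0 _ _ (by omega) (List.getElem?_eq_getElem hlt1),
        Option.map_some, key]
    rcases Nat.lt_or_ge i h0.length with c2 | c2
    · have hieq : i + 1 = h0.length := by omega
      rw [hieq, gmid, ghead i c2]
      have hnone : (none : Option X) = rL (h0 :: T) b (0 + 1) := hr1.symm
      rw [hnone, hf₂r 0, hr0]
      obtain ⟨y, hy⟩ := Option.isSome_iff_exists.mp (List.getLast?_isSome.mpr (hne h0 hmem0))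
      rw [hy, Option.map_some]
      have hhead : h0.head? = some (h0[h0.length - 1 - i]'(by omega)) := by
        rw [List.head?_eq_getElem?,
          ← List.getElem?_eq_getElem (show h0.length - 1 - i < h0.length by omega)]
        congr 1
        omega
      rw [hwrapL h0 hmem0 y _ hy hhead]
    rcases Nat.lt_or_ge i (h0.length + 1) with c3 | c3
    · have hieq : i = h0.length := by omega
      rw [hieq, gmid, Option.map_none]
      have hentry : gL (h0 :: T) b (h0.length + 1) = rL (h0 :: T) b 2 := by
        have := entryLem b (gL (h0 :: T) b) (rL (h0 :: T) b) T (h0.length + 1) 2 hneT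
          (by intro j; exact Hg0 j) (by intro t; exact Hr0 t)
        exact this
      rw [hentry, show (2 : ℕ) = 1 + 1 from rfl, hf₂r 1, hr1]
    · obtain ⟨i', rfl⟩ : ∃ i', i = h0.length + 1 + i' := ⟨i - (h0.length + 1), by omega⟩
      have hcb := claimB (⇑σ⁻¹) b (rL (h0 :: T) b) f₂ hf₂r hbinv (gL (h0 :: T) b) T
        hneT (fun l hl => hstepL l (List.mem_cons_of_mem _ hl))
        (fun l hl => hwrapL l (List.mem_cons_of_mem _ hl))
        (fun l hl => hfixf₂ l (List.mem_cons_of_mem _ hl))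
        (h0.length + 1) 2 (by intro j; exact Hg0 j) (by intro t; exact Hr0 t) i'
      rw [show h0.length + 1 + i' + 1 = h0.length + 1 + 1 + i' from by omega]
      exact hcb
  refine ⟨f₁, f₂, ?_, ?_, ?_, hf₂r, hf₂fix, hf₂surj, ?_, ?_⟩
  · intro i
    rw [hf₁def]
    simp only
    rw [hesymm i]
  · intro t t' h
    rw [hf₁def] at h
    simp only at h
    have h2 := ginj h
    exact e.symm.injective (by omega)
  · intro hs
    obtain ⟨t, ht⟩ := hs (gL (h0 :: T) b 0)
    rw [hf₁def] at ht
    simp only at ht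
    have := ginj ht
    omega
  · intro heq
    have h2lt : 1 < h0.length := by
      have := hlen h0 hmem0
      omega
    have hx : (some (h0[0]'(by omega)) : Option X) ∈ Set.range (gL (h0 :: T) b) := gsurj _
    rw [heq] at hx
    exact NotInR h0 hmem0 0 _ (by omega) (List.getElem?_eq_getElem (by omega)) hx
  · intro x
    have h1 : gL (h0 :: T) b (e.symm (some x)) = some x := hgesymm (some x)
    rw [hf₁def]
    simp only
    rw [MAIN (e.symm (some x)), h1, Option.map_some]

theorem stmt19 {X : Type*} [DecidableEq X] [Countable X] [Infinite X]
    (σ : Equiv.Perm X)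
    (L : List (List X)) (hL : L ≠ [])
    (hnd : ∀ l ∈ L, l.Nodup) (hlen : ∀ l ∈ L, 2 ≤ l.length)
    (hdisj : L.Pairwise fun l l' => ∀ a ∈ l, a ∉ l')
    (hσ : σ = (L.map List.formPerm).prod)
    (hsupp : ∀ x : X, σ x = x ↔ ∀ l ∈ L, x ∉ l)
    (b : ℕ → X) (hb : Function.Injective b)
    (hbr : Set.range b = {x : X | σ x = x}) :
    ∃ f₁ f₂ : Option X → Option X,
      -- the forward ray: a_{1,k₁} ⋯ a_{1,1} z a_{2,k₂} ⋯ a_{2,1} ⋯ a_{m,1} b₁ b₂ ⋯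
      let P : List (Option X) :=
        (L.headI.reverse.map some) ++ [none] ++
          (L.tail.map fun l => l.reverse.map some).flatten
      let g : ℕ → Option X := fun i =>
        if h : i < P.length then P.get ⟨i, h⟩ else some (b (i - P.length))
      -- the backward ray, read from its right end: a_{1,k₁}, z, a_{2,k₂}, ⋯, a_{m,k_m}, b₁, b₂ ⋯
      let R : List (Option X) :=
        L.headI.getLast? :: none :: (L.tail.map List.getLast?)
      let r : ℕ → Option X := fun i =>
        if h : i < R.length then R.get ⟨i, h⟩ else some (b (i - R.length))
      -- f₁ is the forgetful forward swap, f₂ the retentive backward swap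
      (∀ i, f₁ (g i) = g (i + 1)) ∧
      Function.Injective f₁ ∧ ¬ Function.Surjective f₁ ∧
      (∀ i, f₂ (r (i + 1)) = r i) ∧
      (∀ t, t ∉ Set.range r → f₂ t = t) ∧
      Function.Surjective f₂ ∧
      Set.range g ≠ Set.range r ∧
      ∀ x : X, f₂ (f₁ (some x)) = some (σ⁻¹ x) := by
  exact stmt19.main σ L hL hnd hlen hdisj hσ hsupp b hb hbr
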